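/- With the notation of the Green function identities on the universal covering tree: for any neighbors v, w, one has ζ^z(w,v) = (m^z(w)/m^z(v)) ζ^z(v,w) and 1/ζ^z(w,v) − ζ^z(v,w) = 2m^z(v). -/

import Mathlib

open Finset

noncomputable section

set_option linter.unusedSectionVars false

namespace GreenAux

variable {V : Type*} [DecidableEq V]

/-- Index type of pairs `(x, u)` with `u` a neighbour of `x`. -/
abbrev Pe (T : SimpleGraph V) [T.LocallyFinite] := Σ x : V, {u : V // u ∈ T.neighborFinset x}

variable (T : SimpleGraph V) [T.LocallyFinite]

/-- The involution swapping the two entries of an adjacent pair. -/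
def swapE : Pe T ≃ Pe T where
  toFun p := ⟨(p.2 : V), ⟨p.1, by
    have h := p.2.2
    rw [SimpleGraph.mem_neighborFinset] at h ⊢
    exact h.symm⟩⟩
  invFun p := ⟨(p.2 : V), ⟨p.1, by
    have h := p.2.2
    rw [SimpleGraph.mem_neighborFinset] at h ⊢
    exact h.symm⟩⟩
  left_inv p := rfl
  right_inv p := rfl

/-- The weighted adjacency operator. -/
def opL (c : V → V → ℂ) (f : V → ℂ) (x : V) : ℂ := ∑ u ∈ T.neighborFinset x, c x u * f u

variable {T}

theorem summable_fst {D : ℕ} (hD : ∀ x : V, T.degree x ≤ D) {f : V → ℂ}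
    (hf : Summable fun x => ‖f x‖ ^ 2) :
    Summable fun p : Pe T => ‖f p.1‖ ^ 2 := by
  rw [summable_sigma_of_nonneg (fun _ => sq_nonneg _)]
  refine ⟨fun x => Summable.of_finite, ?_⟩
  have key : ∀ x : V, (∑' _ : {u : V // u ∈ T.neighborFinset x}, ‖f x‖ ^ 2)
      = (T.degree x : ℝ) * ‖f x‖ ^ 2 := by
    intro x
    rw [tsum_fintype, Finset.sum_const, Finset.card_univ, Fintype.card_coe,
      SimpleGraph.card_neighborFinset_eq_degree, nsmul_eq_mul]
  simp only [key]
  apply Summable.of_nonneg_of_le (fun x => by positivity)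
    (fun x => ?_) (hf.mul_left (D : ℝ))
  have h1 : (T.degree x : ℝ) ≤ (D : ℝ) := by exact_mod_cast hD x
  have h2 : (0:ℝ) ≤ ‖f x‖ ^ 2 := sq_nonneg _
  nlinarith

theorem summable_snd {D : ℕ} (hD : ∀ x : V, T.degree x ≤ D) {f : V → ℂ}
    (hf : Summable fun x => ‖f x‖ ^ 2) :
    Summable fun p : Pe T => ‖f (p.2 : V)‖ ^ 2 := by
  have := ((swapE T).summable_iff (f := fun p : Pe T => ‖f p.1‖ ^ 2)).2
    (summable_fst hD hf)
  exact this

theorem pair_summable {D : ℕ} (hD : ∀ x : V, T.degree x ≤ D) {c : V → V → ℂ}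
    (hc : ∀ x u, ‖c x u‖ ≤ 1) {f g : V → ℂ}
    (hf : Summable fun x => ‖f x‖ ^ 2) (hg : Summable fun x => ‖g x‖ ^ 2) :
    Summable fun p : Pe T => c p.1 (p.2 : V) * f p.1 * g (p.2 : V) := by
  apply Summable.of_norm
  apply Summable.of_nonneg_of_le (fun p => norm_nonneg _) (fun p => ?_)
    (((summable_fst hD hf).add (summable_snd hD hg)).mul_left (1/2 : ℝ))
  have h1 : ‖c p.1 (p.2 : V) * f p.1 * g (p.2 : V)‖ ≤ ‖f p.1‖ * ‖g (p.2 : V)‖ := by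
    rw [norm_mul, norm_mul]
    have := hc p.1 (p.2 : V)
    have h2 : (0:ℝ) ≤ ‖f p.1‖ := norm_nonneg _
    have h3 : (0:ℝ) ≤ ‖g (p.2 : V)‖ := norm_nonneg _
    calc ‖c p.1 (p.2 : V)‖ * ‖f p.1‖ * ‖g (p.2 : V)‖
        ≤ 1 * ‖f p.1‖ * ‖g (p.2 : V)‖ :=
          mul_le_mul_of_nonneg_right (mul_le_mul_of_nonneg_right this h2) h3
      _ = ‖f p.1‖ * ‖g (p.2 : V)‖ := by ring
  have h4 : ‖f p.1‖ * ‖g (p.2 : V)‖ ≤ 1/2 * (‖f p.1‖ ^ 2 + ‖g (p.2 : V)‖ ^ 2) := by nlinarith [sq_nonneg (‖f p.1‖ - ‖g (p.2 : V)‖)]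
  linarith

theorem pairing {D : ℕ} (hD : ∀ x : V, T.degree x ≤ D) {c : V → V → ℂ}
    (hc : ∀ x u, ‖c x u‖ ≤ 1) {f g : V → ℂ}
    (hf : Summable fun x => ‖f x‖ ^ 2) (hg : Summable fun x => ‖g x‖ ^ 2) :
    ∑' x : V, f x * opL T c g x = ∑' p : Pe T, c p.1 (p.2 : V) * f p.1 * g (p.2 : V) := by
  rw [Summable.tsum_sigma (pair_summable hD hc hf hg)]
  apply tsum_congr
  intro x
  rw [tsum_fintype]
  rw [Finset.sum_coe_sort (T.neighborFinset x) (fun u => c x u * f x * g u)]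
  rw [opL, Finset.mul_sum]
  exact Finset.sum_congr rfl fun u _ => by ring

theorem swap_eq {c : V → V → ℂ} (hcs : ∀ x u, c x u = c u x) (f g : V → ℂ) :
    ∑' p : Pe T, c p.1 (p.2 : V) * f p.1 * g (p.2 : V)
      = ∑' p : Pe T, c p.1 (p.2 : V) * g p.1 * f (p.2 : V) := by
  rw [← Equiv.tsum_eq (swapE T) (fun p : Pe T => c p.1 (p.2 : V) * g p.1 * f (p.2 : V))]
  apply tsum_congr
  intro p
  simp only [swapE, Equiv.coe_fn_mk]
  rw [hcs p.1 (p.2 : V)]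
  ring

theorem prod_summable_single {f g : V → ℂ}
    (hf : Summable fun x => ‖f x‖ ^ 2) (hg : Summable fun x => ‖g x‖ ^ 2) :
    Summable fun s : V => f s * g s := by
  apply Summable.of_norm
  apply Summable.of_nonneg_of_le (fun s => norm_nonneg _) (fun s => ?_)
    ((hf.add hg).mul_left (1/2 : ℝ))
  rw [norm_mul]
  nlinarith [sq_nonneg (‖f s‖ - ‖g s‖), norm_nonneg (f s), norm_nonneg (g s)]

theorem opL_summable {D : ℕ} (hD : ∀ x : V, T.degree x ≤ D) {c : V → V → ℂ}
    (hc : ∀ x u, ‖c x u‖ ≤ 1) {f g : V → ℂ}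
    (hf : Summable fun x => ‖f x‖ ^ 2) (hg : Summable fun x => ‖g x‖ ^ 2) :
    Summable fun x : V => f x * opL T c g x := by
  have h := (pair_summable hD hc hf hg).sigma
  have e : (fun b : V => ∑' j : {u : V // u ∈ T.neighborFinset b},
      c b (j : V) * f b * g (j : V)) = fun b : V => f b * opL T c g b := by
    funext b
    rw [tsum_fintype, Finset.sum_coe_sort (T.neighborFinset b) (fun u => c b u * f b * g u),
      opL, Finset.mul_sum]
    exact Finset.sum_congr rfl fun u _ => by ring
  rwa [e] at h

theorem conj_Q {D : ℕ} (hD : ∀ x : V, T.degree x ≤ D) {c : V → V → ℂ}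
    (hcs : ∀ x u, c x u = c u x) (hcr : ∀ x u, (starRingEnd ℂ) (c x u) = c x u)
    (hcb : ∀ x u, ‖c x u‖ ≤ 1) {f : V → ℂ} (hf : Summable fun x => ‖f x‖ ^ 2) :
    (starRingEnd ℂ) (∑' p : Pe T, c p.1 (p.2 : V) * (starRingEnd ℂ) (f p.1) * f (p.2 : V))
      = ∑' p : Pe T, c p.1 (p.2 : V) * (starRingEnd ℂ) (f p.1) * f (p.2 : V) := by
  have h1 : (starRingEnd ℂ) (∑' p : Pe T, c p.1 (p.2 : V) * (starRingEnd ℂ) (f p.1) * f (p.2 : V))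
      = ∑' p : Pe T, c p.1 (p.2 : V) * f p.1 * (starRingEnd ℂ) (f (p.2 : V)) := by
    rw [starRingEnd_apply, tsum_star]
    apply tsum_congr
    intro p
    simp only [star_mul']
    rw [← starRingEnd_apply, ← starRingEnd_apply, ← starRingEnd_apply, hcr,
      Complex.conj_conj]
  rw [h1]
  exact swap_eq hcs f (fun x => (starRingEnd ℂ) (f x))

theorem eq_zero_of_harmonic {D : ℕ} (hD : ∀ x : V, T.degree x ≤ D) {c : V → V → ℂ}
    (hcs : ∀ x u, c x u = c u x) (hcr : ∀ x u, (starRingEnd ℂ) (c x u) = c x u)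
    (hcb : ∀ x u, ‖c x u‖ ≤ 1) {z : ℂ} (hz : z.im ≠ 0) {f : V → ℂ}
    (hf : Summable fun x => ‖f x‖ ^ 2) (heq : ∀ x, opL T c f x = z * f x) :
    ∀ x, f x = 0 := by
  have hfc : Summable fun x => ‖(starRingEnd ℂ) (f x)‖ ^ 2 := by simpa using hf
  have hp := pairing hD hcb hfc hf
  have hL : ∑' x : V, (starRingEnd ℂ) (f x) * opL T c f x
      = z * ((∑' x : V, ‖f x‖ ^ 2 : ℝ) : ℂ) := by
    have hterm : ∀ x : V, (starRingEnd ℂ) (f x) * opL T c f x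
        = z * ((‖f x‖ ^ 2 : ℝ) : ℂ) := by
      intro x
      rw [heq x]
      have hn : (starRingEnd ℂ) (f x) * f x = ((‖f x‖ ^ 2 : ℝ) : ℂ) := by
        rw [mul_comm, Complex.mul_conj]
        norm_cast
        rw [← Complex.sq_norm]
      calc (starRingEnd ℂ) (f x) * (z * f x) = z * ((starRingEnd ℂ) (f x) * f x) := by ring
        _ = z * ((‖f x‖ ^ 2 : ℝ) : ℂ) := by rw [hn]
    rw [tsum_congr hterm, tsum_mul_left, Complex.ofReal_tsum]
  have hQreal := conj_Q hD hcs hcr hcb hf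
  rw [← hp, hL] at hQreal
  set S : ℝ := ∑' x : V, ‖f x‖ ^ 2 with hSdef
  have hfac : (z - (starRingEnd ℂ) z) * (S : ℂ) = 0 := by
    have := hQreal
    rw [map_mul, Complex.conj_ofReal] at this
    linear_combination -this
  have hzz : z - (starRingEnd ℂ) z ≠ 0 := by
    rw [Complex.sub_conj]
    simp only [ne_eq, mul_eq_zero, Complex.I_ne_zero, or_false]
    exact_mod_cast mul_ne_zero two_ne_zero hz
  have hS0 : S = 0 := by
    rcases mul_eq_zero.1 hfac with h | h
    · exact absurd h hzz
    · exact_mod_cast h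
  intro x
  have hle : ‖f x‖ ^ 2 ≤ S := Summable.le_tsum hf x (fun j _ => sq_nonneg _)
  have : ‖f x‖ = 0 := by nlinarith [norm_nonneg (f x)]
  exact norm_eq_zero.1 this

theorem green_symm {D : ℕ} (hD : ∀ x : V, T.degree x ≤ D) {c : V → V → ℂ}
    (hcs : ∀ x u, c x u = c u x) (hcb : ∀ x u, ‖c x u‖ ≤ 1) {z : ℂ} {g : V → V → ℂ}
    (hl2 : ∀ y, Summable fun x => ‖g x y‖ ^ 2)
    (heq : ∀ x y : V, opL T c (fun s => g s y) x - z * g x y = if x = y then 1 else 0) :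
    ∀ x y : V, g x y = g y x := by
  have key : ∀ x y : V, g x y
      = (∑' p : Pe T, c p.1 (p.2 : V) * g p.1 y * g (p.2 : V) x)
        - z * ∑' s : V, g s x * g s y := by
    intro x y
    have h1 : ∀ s : V, (if s = x then (1:ℂ) else 0) * g s y
        = g s y * opL T c (fun t => g t x) s - z * (g s x * g s y) := by
      intro s
      rw [← heq s x]
      ring
    have hS2 : Summable fun s : V => z * (g s x * g s y) :=
      (prod_summable_single (hl2 x) (hl2 y)).mul_left z
    have hS1 : Summable fun s : V => g s y * opL T c (fun t => g t x) s :=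
      opL_summable hD hcb (hl2 y) (hl2 x)
    calc g x y = ∑' s : V, (if s = x then (1:ℂ) else 0) * g s y := by
          rw [tsum_eq_single x (fun b hb => by rw [if_neg hb, zero_mul])]
          rw [if_pos rfl, one_mul]
      _ = ∑' s : V, (g s y * opL T c (fun t => g t x) s - z * (g s x * g s y)) :=
          tsum_congr h1
      _ = (∑' s : V, g s y * opL T c (fun t => g t x) s)
            - z * ∑' s : V, g s x * g s y := by
          rw [Summable.tsum_sub hS1 hS2, tsum_mul_left]
      _ = (∑' p : Pe T, c p.1 (p.2 : V) * g p.1 y * g (p.2 : V) x)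
            - z * ∑' s : V, g s x * g s y := by
          rw [pairing hD hcb (hl2 y) (hl2 x)]
  intro x y
  have hmc : (∑' s : V, g s x * g s y) = ∑' s : V, g s y * g s x :=
    tsum_congr fun s => mul_comm _ _
  rw [key x y, key y x, swap_eq hcs (fun s => g s y) (fun s => g s x), hmc]

theorem green_diag_im {D : ℕ} (hD : ∀ x : V, T.degree x ≤ D) {c : V → V → ℂ}
    (hcs : ∀ x u, c x u = c u x) (hcr : ∀ x u, (starRingEnd ℂ) (c x u) = c x u)
    (hcb : ∀ x u, ‖c x u‖ ≤ 1) {z : ℂ} (hz : z.im ≠ 0) {g : V → V → ℂ}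
    (hl2 : ∀ y, Summable fun x => ‖g x y‖ ^ 2)
    (heq : ∀ x y : V, opL T c (fun s => g s y) x - z * g x y = if x = y then 1 else 0)
    (v : V) : g v v ≠ 0 := by
  set f : V → ℂ := fun x => g x v with hfdef
  have hf : Summable fun x => ‖f x‖ ^ 2 := hl2 v
  have hfc : Summable fun x => ‖(starRingEnd ℂ) (f x)‖ ^ 2 := by simpa using hf
  have hp := pairing hD hcb hfc hf
  set S : ℝ := ∑' x : V, ‖f x‖ ^ 2 with hSdef
  have hL : ∑' x : V, (starRingEnd ℂ) (f x) * opL T c f x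
      = z * (S : ℂ) + (starRingEnd ℂ) (f v) := by
    have hterm : ∀ x : V, (starRingEnd ℂ) (f x) * opL T c f x
        = z * ((‖f x‖ ^ 2 : ℝ) : ℂ) + (if x = v then (starRingEnd ℂ) (f x) else 0) := by
      intro x
      have hop : opL T c f x = z * f x + (if x = v then 1 else 0) := by
        have := heq x v
        rw [sub_eq_iff_eq_add] at this
        rw [this]; ring
      rw [hop]
      have hn : (starRingEnd ℂ) (f x) * f x = ((‖f x‖ ^ 2 : ℝ) : ℂ) := by
        rw [mul_comm, Complex.mul_conj]
        norm_cast
        rw [← Complex.sq_norm]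
      split_ifs with h
      · rw [mul_add, mul_one]
        calc (starRingEnd ℂ) (f x) * (z * f x) + (starRingEnd ℂ) (f x)
            = z * ((starRingEnd ℂ) (f x) * f x) + (starRingEnd ℂ) (f x) := by ring
          _ = _ := by rw [hn]
      · rw [mul_add, mul_zero, add_zero, add_zero]
        calc (starRingEnd ℂ) (f x) * (z * f x)
            = z * ((starRingEnd ℂ) (f x) * f x) := by ring
          _ = _ := by rw [hn]
    rw [tsum_congr hterm]
    have hs1 : Summable fun x : V => z * ((‖f x‖ ^ 2 : ℝ) : ℂ) :=
      Summable.mul_left z (Complex.summable_ofReal.2 hf)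
    have hs2 : Summable fun x : V => (if x = v then (starRingEnd ℂ) (f x) else 0) :=
      summable_of_ne_finset_zero (s := {v}) (fun b hb => by
        rw [if_neg (by simpa using hb)])
    rw [Summable.tsum_add hs1 hs2, tsum_mul_left, Complex.ofReal_tsum,
      tsum_eq_single v (fun b hb => if_neg hb), if_pos rfl]
  have hQreal := conj_Q hD hcs hcr hcb hf
  rw [← hp, hL] at hQreal
  have hexp : (starRingEnd ℂ) z * (S : ℂ) + f v
      = z * (S : ℂ) + (starRingEnd ℂ) (f v) := by
    have h := hQreal
    rw [map_add, map_mul, Complex.conj_ofReal, Complex.conj_conj] at h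
    exact h
  intro hgv
  have hfv : f v = 0 := hgv
  have hfac : (z - (starRingEnd ℂ) z) * (S : ℂ) = 0 := by
    rw [hfv, map_zero] at hexp
    linear_combination hexp.symm
  have hzz : z - (starRingEnd ℂ) z ≠ 0 := by
    rw [Complex.sub_conj]
    simp only [ne_eq, mul_eq_zero, Complex.I_ne_zero, or_false]
    exact_mod_cast mul_ne_zero two_ne_zero hz
  have hS0 : S = 0 := by
    rcases mul_eq_zero.1 hfac with h | h
    · exact absurd h hzz
    · exact_mod_cast h
  have hf0 : ∀ x, f x = 0 := by
    intro x
    have hle : ‖f x‖ ^ 2 ≤ S := Summable.le_tsum hf x (fun j _ => sq_nonneg _)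
    have : ‖f x‖ = 0 := by nlinarith [norm_nonneg (f x)]
    exact norm_eq_zero.1 this
  have := heq v v
  rw [if_pos rfl] at this
  have hopz : opL T c f v = 0 := by
    rw [opL]
    apply Finset.sum_eq_zero
    intro u _
    rw [hf0 u, mul_zero]
  rw [hopz, hgv] at this
  simp at this



theorem l2_sub {f g : V → ℂ} (hf : Summable fun x => ‖f x‖ ^ 2)
    (hg : Summable fun x => ‖g x‖ ^ 2) : Summable fun x => ‖f x - g x‖ ^ 2 := by
  apply Summable.of_nonneg_of_le (fun x => sq_nonneg _) (fun x => ?_)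
    ((hf.add hg).mul_left 2)
  have h1 : ‖f x - g x‖ ≤ ‖f x‖ + ‖g x‖ := norm_sub_le _ _
  nlinarith [mul_self_le_mul_self (norm_nonneg (f x - g x)) h1,
    sq_nonneg (‖f x‖ - ‖g x‖), norm_nonneg (f x), norm_nonneg (g x)]

theorem l2_mul_const {f : V → ℂ} (hf : Summable fun x => ‖f x‖ ^ 2) (k : ℂ) :
    Summable fun x => ‖f x * k‖ ^ 2 := by
  simp only [norm_mul, mul_pow]
  exact hf.mul_right _

/-- Coefficients of the adjacency operator with the edge `{v, w}` removed. -/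
def cdel (v w : V) : V → V → ℂ := fun x u =>
  if (x = v ∧ u = w) ∨ (x = w ∧ u = v) then 0 else 1

theorem cdel_sym (v w : V) : ∀ x u, cdel v w x u = cdel v w u x := by
  intro x u
  unfold cdel
  by_cases h : (x = v ∧ u = w) ∨ (x = w ∧ u = v)
  · rw [if_pos h, if_pos (by tauto)]
  · rw [if_neg h, if_neg (by tauto)]

theorem cdel_comm (v w : V) : cdel v w = cdel w v := by
  funext x u
  unfold cdel
  by_cases h : (x = v ∧ u = w) ∨ (x = w ∧ u = v)
  · rw [if_pos h, if_pos (by tauto)]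
  · rw [if_neg h, if_neg (by tauto)]

theorem cdel_real (v w : V) : ∀ x u, (starRingEnd ℂ) (cdel v w x u) = cdel v w x u := by
  intro x u
  unfold cdel
  split_ifs <;> simp

theorem cdel_bd (v w : V) : ∀ x u, ‖cdel v w x u‖ ≤ 1 := by
  intro x u
  unfold cdel
  split_ifs <;> simp

theorem cfull_sym : ∀ x u : V, (fun _ _ : V => (1:ℂ)) x u = (fun _ _ : V => (1:ℂ)) u x :=
  fun _ _ => rfl

theorem cfull_real : ∀ x u : V, (starRingEnd ℂ) ((fun _ _ : V => (1:ℂ)) x u)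
    = (fun _ _ : V => (1:ℂ)) x u := fun _ _ => by simp

theorem cfull_bd : ∀ x u : V, ‖(fun _ _ : V => (1:ℂ)) x u‖ ≤ 1 := fun _ _ => by simp

theorem cdel_adj {v w x u : V} (hxu : T.Adj x u) (hc : cdel v w x u ≠ 0) :
    (T \ SimpleGraph.fromEdgeSet {s(v, w)}).Adj x u := by
  rw [SimpleGraph.sdiff_adj]
  refine ⟨hxu, fun hf => ?_⟩
  rw [SimpleGraph.fromEdgeSet_adj, Set.mem_singleton_iff, Sym2.eq_iff] at hf
  exact hc (by unfold cdel; rw [if_pos hf.1])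

/-- The Green column of the edge-deleted graph vanishes on the far side of the
deleted edge. -/
theorem del_component {D : ℕ} (hD : ∀ x : V, T.degree x ≤ D) {z : ℂ} (hz : z.im ≠ 0)
    {v w : V}
    (hbr : ¬ (T \ SimpleGraph.fromEdgeSet {s(v, w)}).Reachable w v)
    {g : V → ℂ} (hg : Summable fun x => ‖g x‖ ^ 2)
    (heq : ∀ x : V, opL T (cdel v w) g x - z * g x = if x = v then 1 else 0) :
    g w = 0 := by
  classical
  set H := T \ SimpleGraph.fromEdgeSet {s(v, w)} with hH
  set h : V → ℂ := fun x => if H.Reachable w x then g x else 0 with hh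
  have hl2h : Summable fun x => ‖h x‖ ^ 2 := by
    apply Summable.of_nonneg_of_le (fun x => sq_nonneg _) (fun x => ?_) hg
    rw [hh]
    simp only
    split_ifs
    · exact le_refl _
    · simpa using sq_nonneg ‖g x‖
  have hharm : ∀ x, opL T (cdel v w) h x = z * h x := by
    intro x
    by_cases hR : H.Reachable w x
    · have hterm : ∀ u ∈ T.neighborFinset x, cdel v w x u * h u = cdel v w x u * g u := by
        intro u hu
        by_cases hc : cdel v w x u = 0
        · rw [hc, zero_mul, zero_mul]
        · have hHadj : H.Adj x u := cdel_adj (by rwa [SimpleGraph.mem_neighborFinset] at hu) hc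
          have hru : H.Reachable w u := hR.trans hHadj.reachable
          rw [hh]
          simp only
          rw [if_pos hru]
      have hlg : opL T (cdel v w) h x = opL T (cdel v w) g x := by
        rw [opL, opL]; exact Finset.sum_congr rfl hterm
      have hxv : x ≠ v := fun hxv => hbr (hxv ▸ hR)
      have h2 := heq x
      rw [if_neg hxv, sub_eq_zero] at h2
      rw [hlg, h2, hh]
      simp only
      rw [if_pos hR]
    · have hzero : opL T (cdel v w) h x = 0 := by
        rw [opL]
        apply Finset.sum_eq_zero
        intro u hu
        by_cases hc : cdel v w x u = 0
        · rw [hc, zero_mul]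
        · have hHadj : H.Adj x u := cdel_adj (by rwa [SimpleGraph.mem_neighborFinset] at hu) hc
          have hu0 : h u = 0 := by
            rw [hh]
            simp only
            rw [if_neg]
            intro hru
            exact hR (hru.trans hHadj.symm.reachable)
          rw [hu0, mul_zero]
      rw [hzero, hh]
      simp only
      rw [if_neg hR, mul_zero]
  have hzz := eq_zero_of_harmonic hD (cdel_sym v w) (cdel_real v w) (cdel_bd v w)
    hz hl2h hharm
  have := hzz w
  rw [hh] at this
  simp only at this
  rwa [if_pos (SimpleGraph.Reachable.refl w)] at this

theorem resolvent_id {D : ℕ} (hD : ∀ x : V, T.degree x ≤ D) {z : ℂ} (hz : z.im ≠ 0)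
    {v w : V} (hvw : T.Adj v w)
    {Gr : V → V → ℂ} (hGl2 : ∀ y, Summable fun x => ‖Gr x y‖ ^ 2)
    (hGeq : ∀ x y : V, opL T (fun _ _ => (1:ℂ)) (fun s => Gr s y) x - z * Gr x y
      = if x = y then 1 else 0)
    {g : V → V → ℂ} (hgl2 : ∀ y, Summable fun x => ‖g x y‖ ^ 2)
    (hgeq : ∀ x y : V, opL T (cdel v w) (fun s => g s y) x - z * g x y
      = if x = y then 1 else 0) :
    ∀ x y : V, g x y = Gr x y + g x v * Gr w y + g x w * Gr v y := by
  have hvne : v ≠ w := hvw.ne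
  intro x0 y
  set F : V → ℂ := fun x => g x y - Gr x y - g x v * Gr w y - g x w * Gr v y with hF
  have hFl2 : Summable fun x => ‖F x‖ ^ 2 := by
    apply l2_sub (l2_sub (l2_sub (hgl2 y) (hGl2 y)) (l2_mul_const (hgl2 v) _))
      (l2_mul_const (hgl2 w) _)
  have hdiff : ∀ x : V, opL T (cdel v w) (fun s => Gr s y) x
      = opL T (fun _ _ => (1:ℂ)) (fun s => Gr s y) x
        - (if x = v then Gr w y else if x = w then Gr v y else 0) := by
    intro x
    have hsub : opL T (fun _ _ => (1:ℂ)) (fun s => Gr s y) x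
        - opL T (cdel v w) (fun s => Gr s y) x
        = (if x = v then Gr w y else if x = w then Gr v y else 0) := by
      rw [opL, opL, ← Finset.sum_sub_distrib]
      have hterm : ∀ u ∈ T.neighborFinset x, (1:ℂ) * Gr u y - cdel v w x u * Gr u y
          = (if (x = v ∧ u = w) ∨ (x = w ∧ u = v) then 1 else 0) * Gr u y := by
        intro u _
        unfold cdel
        split_ifs <;> ring
      rw [Finset.sum_congr rfl hterm]
      by_cases hxv : x = v
      · subst hxv
        have hcond : ∀ u : V, ((x = x ∧ u = w) ∨ (x = w ∧ u = x)) ↔ u = w := by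
          intro u
          constructor
          · rintro (⟨-, h⟩ | ⟨h, -⟩)
            · exact h
            · exact absurd h hvne
          · intro h; exact Or.inl ⟨rfl, h⟩
        have : ∀ u ∈ T.neighborFinset x,
            (if (x = x ∧ u = w) ∨ (x = w ∧ u = x) then (1:ℂ) else 0) * Gr u y
              = if u = w then Gr u y else 0 := by
          intro u _
          by_cases h : u = w
          · rw [if_pos ((hcond u).2 h), if_pos h, one_mul]
          · rw [if_neg (fun hc => h ((hcond u).1 hc)), if_neg h, zero_mul]
        rw [Finset.sum_congr rfl this, Finset.sum_ite_eq' (T.neighborFinset x) w,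
          if_pos (by rw [SimpleGraph.mem_neighborFinset]; exact hvw), if_pos rfl]
      · by_cases hxw : x = w
        · subst hxw
          have hcond : ∀ u : V, ((x = v ∧ u = x) ∨ (x = x ∧ u = v)) ↔ u = v := by
            intro u
            constructor
            · rintro (⟨h, -⟩ | ⟨-, h⟩)
              · exact absurd h.symm hvne
              · exact h
            · intro h; exact Or.inr ⟨rfl, h⟩
          have : ∀ u ∈ T.neighborFinset x,
              (if (x = v ∧ u = x) ∨ (x = x ∧ u = v) then (1:ℂ) else 0) * Gr u y
                = if u = v then Gr u y else 0 := by
            intro u _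
            by_cases h : u = v
            · rw [if_pos ((hcond u).2 h), if_pos h, one_mul]
            · rw [if_neg (fun hc => h ((hcond u).1 hc)), if_neg h, zero_mul]
          rw [Finset.sum_congr rfl this, Finset.sum_ite_eq' (T.neighborFinset x) v,
            if_pos (by rw [SimpleGraph.mem_neighborFinset]; exact hvw.symm), if_neg hxv, if_pos rfl]
        · have : ∀ u ∈ T.neighborFinset x,
              (if (x = v ∧ u = w) ∨ (x = w ∧ u = v) then (1:ℂ) else 0) * Gr u y = 0 := by
            intro u _
            rw [if_neg, zero_mul]
            rintro (⟨h, -⟩ | ⟨h, -⟩)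
            · exact hxv h
            · exact hxw h
          rw [Finset.sum_eq_zero this, if_neg hxv, if_neg hxw]
    linear_combination -hsub
  have hFharm : ∀ x : V, opL T (cdel v w) F x = z * F x := by
    intro x
    have hlin : opL T (cdel v w) F x
        = opL T (cdel v w) (fun s => g s y) x - opL T (cdel v w) (fun s => Gr s y) x
          - opL T (cdel v w) (fun s => g s v) x * Gr w y
          - opL T (cdel v w) (fun s => g s w) x * Gr v y := by
      rw [opL, opL, opL, opL, opL, Finset.sum_mul, Finset.sum_mul,
        ← Finset.sum_sub_distrib, ← Finset.sum_sub_distrib, ← Finset.sum_sub_distrib]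
      apply Finset.sum_congr rfl
      intro u _
      rw [hF]
      ring
    have e1 : opL T (cdel v w) (fun s => g s y) x
        = z * g x y + (if x = y then 1 else 0) := by
      have h := hgeq x y; rw [sub_eq_iff_eq_add] at h; rw [h]; ring
    have e3 : opL T (cdel v w) (fun s => g s v) x
        = z * g x v + (if x = v then 1 else 0) := by
      have h := hgeq x v; rw [sub_eq_iff_eq_add] at h; rw [h]; ring
    have e4 : opL T (cdel v w) (fun s => g s w) x
        = z * g x w + (if x = w then 1 else 0) := by
      have h := hgeq x w; rw [sub_eq_iff_eq_add] at h; rw [h]; ring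
    have e2 : opL T (cdel v w) (fun s => Gr s y) x
        = z * Gr x y + (if x = y then 1 else 0)
          - (if x = v then Gr w y else if x = w then Gr v y else 0) := by
      rw [hdiff x]
      have h := hGeq x y; rw [sub_eq_iff_eq_add] at h; rw [h]; ring
    rw [hlin, e1, e2, e3, e4, hF]
    simp only
    by_cases hxv : x = v
    · subst hxv
      rw [if_pos rfl, if_pos rfl, if_neg hvne]
      ring
    · by_cases hxw : x = w
      · subst hxw
        rw [if_neg hxv, if_neg hxv, if_pos rfl, if_pos rfl]
        ring
      · rw [if_neg hxv, if_neg hxv, if_neg hxw, if_neg hxw]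
        ring
  have hF0 := eq_zero_of_harmonic hD (cdel_sym v w) (cdel_real v w) (cdel_bd v w)
    hz hFl2 hFharm
  have := hF0 x0
  rw [hF] at this
  simp only at this
  linear_combination this


end GreenAux

end

open Finset

/-- `g` is the Green function of the adjacency operator of `T` at `z`. -/
def IsGreen {V : Type*} [DecidableEq V] (T : SimpleGraph V) [T.LocallyFinite]
    (z : ℂ) (g : V → V → ℂ) : Prop :=
  (∀ y : V, Summable fun x : V => ‖g x y‖ ^ 2) ∧
  (∀ x y : V, (∑ u ∈ T.neighborFinset x, g u y) - z * g x y =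
    if x = y then 1 else 0)

/-- `g` is the Green function of `T` with the single edge `{a, b}` removed. -/
def IsGreenDel {V : Type*} [DecidableEq V] (T : SimpleGraph V) [T.LocallyFinite]
    (a b : V) (z : ℂ) (g : V → V → ℂ) : Prop :=
  (∀ y : V, Summable fun x : V => ‖g x y‖ ^ 2) ∧
  (∀ x y : V, (∑ u ∈ T.neighborFinset x,
      if (x = a ∧ u = b) ∨ (x = b ∧ u = a) then 0 else g u y) - z * g x y =
    if x = y then 1 else 0)

open GreenAux in
/-- Lemma, reversal identities: on the universal covering tree,
for any neighbours `v, w`: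
`ζ^z(w,v) = (m^z(w)/m^z(v)) ζ^z(v,w)` and `1/ζ^z(w,v) - ζ^z(v,w) = 2m^z(v)`. -/
theorem green_reversal {V : Type*} [DecidableEq V]
    (T : SimpleGraph V) [T.LocallyFinite] (htree : T.IsTree)
    (D : ℕ) (hdeg : ∀ v : V, 2 ≤ T.degree v ∧ T.degree v ≤ D)
    (z : ℂ) (hz : z.im ≠ 0)
    (Gr : V → V → ℂ) (hGr : IsGreen T z Gr)
    (gdel : V → V → V → V → ℂ)
    (hgdel : ∀ a b : V, T.Adj a b → IsGreenDel T a b z (gdel a b))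
    (zeta : V → V → ℂ) (hzeta : ∀ a b : V, zeta a b = - gdel a b b b)
    (twoM : V → ℂ) (htwoM : ∀ v : V, twoM v = - (Gr v v)⁻¹) :
    ∀ v w : V, T.Adj v w →
      zeta w v = (twoM w / twoM v) * zeta v w ∧
      (zeta w v)⁻¹ - zeta v w = twoM v := by
  intro v w hvw
  classical
  have hD : ∀ x : V, T.degree x ≤ D := fun x => (hdeg x).2
  have hvne : v ≠ w := hvw.ne
  have hGl2 := hGr.1
  have hGeq : ∀ x y : V, opL T (fun _ _ => (1:ℂ)) (fun s => Gr s y) x - z * Gr x y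
      = if x = y then 1 else 0 := by
    intro x y
    have h := hGr.2 x y
    rw [opL]
    simpa only [one_mul] using h
  have hdeleq : ∀ (g : V → V → ℂ), IsGreenDel T v w z g →
      ∀ x y : V, opL T (cdel v w) (fun s => g s y) x - z * g x y
        = if x = y then 1 else 0 := by
    intro g hg x y
    have h := hg.2 x y
    rw [opL]
    have hterm : ∀ u ∈ T.neighborFinset x, cdel v w x u * g u y
        = if (x = v ∧ u = w) ∨ (x = w ∧ u = v) then 0 else g u y := by
      intro u _
      unfold cdel
      split_ifs <;> ring
    rw [Finset.sum_congr rfl hterm]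
    exact h
  have hg1 := hgdel v w hvw
  have hg2' := hgdel w v hvw.symm
  have hg2 : IsGreenDel T v w z (gdel w v) := by
    refine ⟨hg2'.1, fun x y => ?_⟩
    have h := hg2'.2 x y
    rw [← h]
    congr 1
    apply Finset.sum_congr rfl
    intro u _
    exact if_congr or_comm rfl rfl
  have heq1 := hdeleq _ hg1
  have heq2 := hdeleq _ hg2
  have hsym : ∀ x y : V, Gr x y = Gr y x :=
    green_symm hD cfull_sym cfull_bd hGl2 hGeq
  have ha : Gr v v ≠ 0 := green_diag_im hD cfull_sym cfull_real cfull_bd hz hGl2 hGeq v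
  have hb : Gr w w ≠ 0 := green_diag_im hD cfull_sym cfull_real cfull_bd hz hGl2 hGeq w
  have hbridge : T.IsBridge s(v, w) :=
    (SimpleGraph.isAcyclic_iff_forall_adj_isBridge.1 htree.2) hvw
  have hnr : ¬ (T \ SimpleGraph.fromEdgeSet {s(v, w)}).Reachable v w :=
    SimpleGraph.isBridge_iff.1 hbridge
  have hnr' : ¬ (T \ SimpleGraph.fromEdgeSet {s(v, w)}).Reachable w v :=
    fun h => hnr h.symm
  have hg1wv : gdel v w w v = 0 :=
    del_component hD hz hnr' (hg1.1 v) (fun x => heq1 x v)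
  have hg2vw : gdel w v v w = 0 := by
    apply del_component (v := w) (w := v) hD hz ?_ (hg2'.1 w) ?_
    · rw [Sym2.eq_swap]
      exact hnr
    · intro x
      rw [cdel_comm w v]
      exact heq2 x w
  have hres1 := resolvent_id hD hz hvw hGl2 hGeq hg1.1 heq1
  have hres2 := resolvent_id hD hz hvw hGl2 hGeq hg2'.1 heq2
  have E1 : gdel v w w w * Gr v v = - Gr v w := by
    have h := hres1 w v
    rw [hg1wv] at h
    have hs := hsym w v
    linear_combination -h - hs
  have E2 : gdel w v v v * Gr w w = - Gr v w := by
    have h := hres2 v w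
    rw [hg2vw] at h
    linear_combination -h
  have E3 : gdel w v v v * (1 - Gr v w) = Gr v v := by
    have h := hres2 v v
    rw [hg2vw] at h
    have hs := hsym w v
    linear_combination h + (gdel w v v v) * hs
  have hq : gdel w v v v ≠ 0 := by
    intro h0
    rw [h0, zero_mul] at E3
    exact ha E3.symm
  constructor
  · rw [hzeta w v, hzeta v w, htwoM v, htwoM w]
    have key : gdel w v v v * Gr w w = gdel v w w w * Gr v v := E2.trans E1.symm
    have h1 : (-(Gr w w)⁻¹ / -(Gr v v)⁻¹) = Gr v v / Gr w w := by
      rw [neg_div_neg_eq, inv_div_inv]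
    rw [h1, div_mul_eq_mul_div, eq_div_iff hb]
    linear_combination -key
  · rw [hzeta w v, hzeta v w, htwoM v]
    have h2 : (-(gdel w v v v))⁻¹ = -((1 - Gr v w) / Gr v v) := by
      rw [inv_neg]
      congr 1
      rw [eq_div_iff ha, ← E3, ← mul_assoc, inv_mul_cancel₀ hq, one_mul]
    rw [h2]
    rw [div_eq_mul_inv, sub_neg_eq_add]
    have : (Gr v v)⁻¹ * Gr v v = 1 := inv_mul_cancel₀ ha
    linear_combination (Gr v v)⁻¹ * E1 - gdel v w w w * this
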